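/- Let A be the adjacency matrix and D the degree matrix of a finite undirected graph, and let s_p(r) denote the p-th smallest eigenvalue of D - r·A. Suppose there is r_p > 1 such that for all r ≥ r_p the eigenvalue s_p(r) is simple, and s_p(r_p) < 0. Then for every r ≥ r_p the derivative of s_p with respect to r is strictly negative; in particular s_p is strictly decreasing on [r_p, ∞). -/

import Mathlib

open Matrix Topology Filter

/-- Ascending list of eigenvalues (with multiplicity) of a Hermitian real matrix. -/
noncomputable def sortEig {n : ℕ} {M : Matrix (Fin n) (Fin n) ℝ} (hM : M.IsHermitian) :
    Fin n → ℝ :=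
  fun i => hM.eigenvalues (Tuple.sort hM.eigenvalues i)

section Aux

variable {n : ℕ}

local notation "⟪" x ", " y "⟫" => @inner ℝ (EuclideanSpace ℝ (Fin n)) _ x y

/-- Rayleigh quotient (as dot product) expanded in the eigenbasis. -/
lemma rayleigh_formula {M : Matrix (Fin n) (Fin n) ℝ} (hM : M.IsHermitian)
    (x : EuclideanSpace ℝ (Fin n)) :
    (x : Fin n → ℝ) ⬝ᵥ (M *ᵥ (x : Fin n → ℝ)) =
      ∑ i, hM.eigenvalues i * (hM.eigenvectorBasis.repr x i) ^ 2 := by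
  set b := hM.eigenvectorBasis with hb
  have hsum : (∑ i, b.repr x i • b i) = x := b.sum_repr x
  have hMx : M *ᵥ (x : Fin n → ℝ) =
      ∑ i, (b.repr x i * hM.eigenvalues i) • (b i : Fin n → ℝ) := by
    conv_lhs => rw [← hsum]
    have : ((∑ i, b.repr x i • b i : EuclideanSpace ℝ (Fin n)) : Fin n → ℝ)
        = ∑ i, b.repr x i • (b i : Fin n → ℝ) := by ext j; simp
    rw [this]
    have hms : M *ᵥ (∑ i, b.repr x i • (b i : Fin n → ℝ))
        = ∑ i, b.repr x i • (M *ᵥ (b i : Fin n → ℝ)) := by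
      have h := map_sum (M.mulVecLin) (fun i => b.repr x i • (b i : Fin n → ℝ)) Finset.univ
      simp only [_root_.map_smul] at h
      exact h
    rw [hms]
    refine Finset.sum_congr rfl fun i _ => ?_
    have he : M *ᵥ (b i : Fin n → ℝ) = hM.eigenvalues i • (b i : Fin n → ℝ) :=
      hM.mulVec_eigenvectorBasis i
    rw [he, smul_smul, mul_comm]
  have hds : (x : Fin n → ℝ) ⬝ᵥ (∑ i, (b.repr x i * hM.eigenvalues i) • (b i : Fin n → ℝ))
      = ∑ i, (x : Fin n → ℝ) ⬝ᵥ ((b.repr x i * hM.eigenvalues i) • (b i : Fin n → ℝ)) := by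
    simp only [dotProduct, Finset.sum_apply, Finset.mul_sum]
    exact Finset.sum_comm
  rw [hMx, hds]
  refine Finset.sum_congr rfl fun i _ => ?_
  rw [dotProduct_smul]
  have hdx : (x : Fin n → ℝ) ⬝ᵥ (b i : Fin n → ℝ) = b.repr x i := by
    have h1 : ⟪b i, x⟫ = b.repr x i := (b.repr_apply_apply x i).symm
    have h2 : ⟪b i, x⟫ = ⟪x, b i⟫ := real_inner_comm _ _
    have h3 : ⟪x, b i⟫ = (x : Fin n → ℝ) ⬝ᵥ (b i : Fin n → ℝ) := by
      simp [PiLp.inner_apply, dotProduct, mul_comm]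
    rw [← h3, ← h2, h1]
  rw [smul_eq_mul, hdx]
  ring

/-- Parseval: sum of squared coordinates equals the inner square. -/
lemma parseval {M : Matrix (Fin n) (Fin n) ℝ} (hM : M.IsHermitian)
    (x : EuclideanSpace ℝ (Fin n)) :
    ∑ i, (hM.eigenvectorBasis.repr x i) ^ 2 = ⟪x, x⟫ := by
  have h := hM.eigenvectorBasis.repr.inner_map_map x x
  rw [← h, PiLp.inner_apply]
  refine Finset.sum_congr rfl fun i _ => ?_
  simp [RCLike.inner_apply, sq]

/-- Coordinates vanish outside the index set of a span. -/
lemma repr_eq_zero_of_mem_span {M : Matrix (Fin n) (Fin n) ℝ} (hM : M.IsHermitian)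
    (S : Finset (Fin n)) {x : EuclideanSpace ℝ (Fin n)}
    (hx : x ∈ Submodule.span ℝ (hM.eigenvectorBasis '' (S : Set (Fin n))))
    {i : Fin n} (hi : i ∉ S) : hM.eigenvectorBasis.repr x i = 0 := by
  set b := hM.eigenvectorBasis with hb
  have hxo : x ∈ (ℝ ∙ (b i))ᗮ := by
    have hle : Submodule.span ℝ (b '' (S : Set (Fin n))) ≤ (ℝ ∙ (b i))ᗮ := by
      rw [Submodule.span_le]
      rintro y ⟨j, hj, rfl⟩
      rw [SetLike.mem_coe, Submodule.mem_orthogonal_singleton_iff_inner_right]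
      exact b.orthonormal.2 (fun h => hi (h ▸ hj))
    exact hle hx
  have h0 := Submodule.mem_orthogonal_singleton_iff_inner_right.1 hxo
  rw [b.repr_apply_apply, h0]

/-- The span of an orthonormal subfamily indexed by a finset has rank the card. -/
lemma finrank_span_eigen {M : Matrix (Fin n) (Fin n) ℝ} (hM : M.IsHermitian)
    (S : Finset (Fin n)) :
    Module.finrank ℝ (Submodule.span ℝ (hM.eigenvectorBasis '' (S : Set (Fin n)))) =
      S.card := by
  set b := hM.eigenvectorBasis with hb
  have hli : LinearIndependent ℝ (fun j : {i // i ∈ S} => b j) :=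
    (b.orthonormal.linearIndependent).comp _ Subtype.val_injective
  have hrange : Set.range (fun j : {i // i ∈ S} => b j) = b '' (S : Set (Fin n)) := by
    ext y; simp [Set.mem_image]
  rw [← hrange, finrank_span_eq_card hli, Fintype.card_coe]

/-- Weyl-type comparison with a scale factor: if `x⬝Mx ≤ c · x⬝Nx` pointwise then each
sorted eigenvalue of `M` is at most `c` times the corresponding one of `N`. -/
lemma sortEig_le_smul {M N : Matrix (Fin n) (Fin n) ℝ}
    (hM : M.IsHermitian) (hN : N.IsHermitian) {c : ℝ} (hc : 0 < c)
    (h : ∀ x : Fin n → ℝ, x ⬝ᵥ (M *ᵥ x) ≤ c * (x ⬝ᵥ (N *ᵥ x)))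
    (k : Fin n) : sortEig hM k ≤ c * sortEig hN k := by
  classical
  set σ := Tuple.sort hM.eigenvalues with hσ
  set τ := Tuple.sort hN.eigenvalues with hτ
  set S : Finset (Fin n) := (Finset.Ici k).image σ with hS
  set T : Finset (Fin n) := (Finset.Iic k).image τ with hT
  set u := hM.eigenvectorBasis with hu
  set v := hN.eigenvectorBasis with hv
  set V := Submodule.span ℝ (u '' (S : Set (Fin n))) with hV
  set W := Submodule.span ℝ (v '' (T : Set (Fin n))) with hW
  -- dimension count
  have hcardS : S.card = (Finset.Ici k).card :=
    Finset.card_image_of_injective _ σ.injective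
  have hcardT : T.card = (Finset.Iic k).card :=
    Finset.card_image_of_injective _ τ.injective
  have hcards : S.card + T.card = n + 1 := by
    rw [hcardS, hcardT]
    have hunion : (Finset.Ici k) ∪ (Finset.Iic k) = Finset.univ := by
      ext j; simp [le_total k j]
    have hinter : (Finset.Ici k) ∩ (Finset.Iic k) = {k} := by
      ext j
      simp only [Finset.mem_inter, Finset.mem_Ici, Finset.mem_Iic, Finset.mem_singleton]
      constructor
      · rintro ⟨h1, h2⟩; exact le_antisymm h2 h1
      · rintro rfl; exact ⟨le_refl _, le_refl _⟩
    have h2 := Finset.card_union_add_card_inter (Finset.Ici k) (Finset.Iic k)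
    rw [hunion, hinter] at h2
    simp only [Finset.card_univ, Fintype.card_fin, Finset.card_singleton] at h2
    omega
  have hVW : 0 < Module.finrank ℝ (V ⊓ W : Submodule ℝ (EuclideanSpace ℝ (Fin n))) := by
    have hsum := Submodule.finrank_sup_add_finrank_inf_eq V W
    have hVr : Module.finrank ℝ V = S.card := finrank_span_eigen hM S
    have hWr : Module.finrank ℝ W = T.card := finrank_span_eigen hN T
    have hle : Module.finrank ℝ (V ⊔ W : Submodule ℝ (EuclideanSpace ℝ (Fin n))) ≤ n := by
      have := Submodule.finrank_le (V ⊔ W)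
      rwa [finrank_euclideanSpace_fin] at this
    omega
  have hnebot : (V ⊓ W : Submodule ℝ (EuclideanSpace ℝ (Fin n))) ≠ ⊥ := by
    intro hbot
    rw [hbot] at hVW
    simp [finrank_bot] at hVW
  obtain ⟨x, hxVW, hx0⟩ := Submodule.exists_mem_ne_zero_of_ne_bot hnebot
  have hxV : x ∈ V := (Submodule.mem_inf.1 hxVW).1
  have hxW : x ∈ W := (Submodule.mem_inf.1 hxVW).2
  -- Rayleigh bounds
  have hC : (0 : ℝ) < ⟪x, x⟫ :=
    lt_of_le_of_ne real_inner_self_nonneg (Ne.symm (inner_self_ne_zero.2 hx0))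
  have hMlow : sortEig hM k * ⟪x, x⟫ ≤ (x : Fin n → ℝ) ⬝ᵥ (M *ᵥ (x : Fin n → ℝ)) := by
    rw [rayleigh_formula hM x, ← parseval hM x, Finset.mul_sum]
    refine Finset.sum_le_sum fun i _ => ?_
    by_cases hiS : i ∈ S
    · obtain ⟨j, hj, rfl⟩ := Finset.mem_image.1 hiS
      have hmono : hM.eigenvalues (σ k) ≤ hM.eigenvalues (σ j) :=
        Tuple.monotone_sort hM.eigenvalues (Finset.mem_Ici.1 hj)
      have : sortEig hM k ≤ hM.eigenvalues (σ j) := hmono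
      exact mul_le_mul_of_nonneg_right this (sq_nonneg _)
    · rw [repr_eq_zero_of_mem_span hM S hxV hiS]
      simp
  have hNhigh : (x : Fin n → ℝ) ⬝ᵥ (N *ᵥ (x : Fin n → ℝ)) ≤ sortEig hN k * ⟪x, x⟫ := by
    rw [rayleigh_formula hN x, ← parseval hN x, Finset.mul_sum]
    refine Finset.sum_le_sum fun i _ => ?_
    by_cases hiT : i ∈ T
    · obtain ⟨j, hj, rfl⟩ := Finset.mem_image.1 hiT
      have hmono : hN.eigenvalues (τ j) ≤ hN.eigenvalues (τ k) :=
        Tuple.monotone_sort hN.eigenvalues (Finset.mem_Iic.1 hj)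
      exact mul_le_mul_of_nonneg_right hmono (sq_nonneg _)
    · rw [repr_eq_zero_of_mem_span hN T hxW hiT]
      simp
  have hchain : sortEig hM k * ⟪x, x⟫ ≤ (c * sortEig hN k) * ⟪x, x⟫ := by
    calc sortEig hM k * ⟪x, x⟫ ≤ (x : Fin n → ℝ) ⬝ᵥ (M *ᵥ (x : Fin n → ℝ)) := hMlow
      _ ≤ c * ((x : Fin n → ℝ) ⬝ᵥ (N *ᵥ (x : Fin n → ℝ))) := h x
      _ ≤ c * (sortEig hN k * ⟪x, x⟫) := by
          exact mul_le_mul_of_nonneg_left hNhigh hc.le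
      _ = (c * sortEig hN k) * ⟪x, x⟫ := by ring
  exact le_of_mul_le_mul_right hchain hC

end Aux

/-- if for all `r ≥ r_p` the `p`-th smallest eigenvalue `s_p(r)` of
`D - r•A` is simple (multiplicity one in the characteristic polynomial) and
`s_p(r_p) < 0`, then any derivative of `r ↦ s_p(r)` on `[r_p, ∞)` is strictly
negative, and `s_p` is strictly decreasing on `[r_p, ∞)`. -/
theorem stmt1 {n : ℕ} (A D : Matrix (Fin n) (Fin n) ℝ)
    (hAsymm : Aᵀ = A) (hA01 : ∀ i j, A i j = 0 ∨ A i j = 1) (hAdiag : ∀ i, A i i = 0)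
    (hD : D = Matrix.diagonal fun i => ∑ j, A i j)
    (p : ℕ) (hp2 : 2 ≤ p) (hpn : p ≤ n)
    (hH : ∀ r : ℝ, (D - r • A).IsHermitian)
    (rp : ℝ) (hrp : 1 < rp)
    (hsimple : ∀ r : ℝ, rp ≤ r →
      (D - r • A).charpoly.roots.count (sortEig (hH r) ⟨p - 1, by omega⟩) = 1)
    (hneg : sortEig (hH rp) ⟨p - 1, by omega⟩ < 0) :
    (∀ r : ℝ, rp ≤ r → ∀ d : ℝ,
        HasDerivAt (fun t : ℝ => sortEig (hH t) ⟨p - 1, by omega⟩) d r → d < 0) ∧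
    StrictAntiOn (fun t : ℝ => sortEig (hH t) ⟨p - 1, by omega⟩) (Set.Ici rp) := by
  set k : Fin n := ⟨p - 1, by omega⟩ with hk
  set s : ℝ → ℝ := fun t : ℝ => sortEig (hH t) k with hs
  -- nonnegativity of the quadratic form of D
  have hDq : ∀ x : Fin n → ℝ, 0 ≤ x ⬝ᵥ (D *ᵥ x) := by
    intro x
    rw [hD]
    have : (Matrix.diagonal fun i => ∑ j, A i j) *ᵥ x = fun i => (∑ j, A i j) * x i := by
      funext i; rw [mulVec_diagonal]
    rw [this]
    refine Finset.sum_nonneg fun i _ => ?_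
    have hdeg : 0 ≤ ∑ j, A i j :=
      Finset.sum_nonneg fun j _ => by rcases hA01 i j with h | h <;> simp [h]
    have : x i * ((∑ j, A i j) * x i) = (∑ j, A i j) * (x i) ^ 2 := by ring
    rw [this]
    exact mul_nonneg hdeg (sq_nonneg _)
  -- the key step : for 0 < r ≤ r', s r' ≤ (r'/r) * s r
  have hstep : ∀ r r' : ℝ, 0 < r → r ≤ r' → s r' ≤ (r' / r) * s r := by
    intro r r' hr hrr'
    have hc : (0 : ℝ) < r' / r := div_pos (lt_of_lt_of_le hr hrr') hr
    refine sortEig_le_smul (hH r') (hH r) hc (fun x => ?_) k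
    have hexp : ∀ t : ℝ, x ⬝ᵥ ((D - t • A) *ᵥ x) = x ⬝ᵥ (D *ᵥ x) - t * (x ⬝ᵥ (A *ᵥ x)) := by
      intro t
      rw [sub_mulVec, dotProduct_sub, smul_mulVec]
      congr 1
      rw [dotProduct_smul, smul_eq_mul]
    rw [hexp r', hexp r]
    have h1 : (1 : ℝ) ≤ r' / r := (one_le_div hr).2 hrr'
    have hrc : (r' / r) * r = r' := div_mul_cancel₀ _ hr.ne'
    have hDx := hDq x
    have h3 : (r' / r) * r * (x ⬝ᵥ A *ᵥ x) = r' * (x ⬝ᵥ A *ᵥ x) := by rw [hrc]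
    have h4 : 0 ≤ ((r' / r) - 1) * (x ⬝ᵥ D *ᵥ x) :=
      mul_nonneg (sub_nonneg.2 h1) hDx
    nlinarith [h3, h4]
  -- negativity propagates
  have hrp0 : (0 : ℝ) < rp := lt_trans one_pos hrp
  have hneg' : ∀ r : ℝ, rp ≤ r → s r < 0 := by
    intro r hr
    have := hstep rp r hrp0 hr
    have hpos : (0 : ℝ) < r / rp := div_pos (lt_of_lt_of_le hrp0 hr) hrp0
    calc s r ≤ (r / rp) * s rp := this
      _ < 0 := mul_neg_of_pos_of_neg hpos hneg
  constructor
  · -- derivative bound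
    intro r hr d hder
    have hr0 : (0 : ℝ) < r := lt_of_lt_of_le hrp0 hr
    have hsr : s r < 0 := hneg' r hr
    have htend : Filter.Tendsto (slope s r) (𝓝[>] r) (𝓝 d) := by
      have := hasDerivAt_iff_tendsto_slope.1 hder
      exact this.mono_left (nhdsWithin_mono r fun y hy => ne_of_gt hy)
    have hbound : ∀ᶠ y in 𝓝[>] r, slope s r y ≤ s r / r := by
      filter_upwards [self_mem_nhdsWithin] with y hy
      have hyr : r < y := hy
      have hsy : s y ≤ (y / r) * s r := hstep r y hr0 hyr.le
      rw [slope_def_field]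
      rw [div_le_div_iff₀ (by linarith) hr0]
      have : (y / r) * s r * r = y * s r := by field_simp
      nlinarith [hsy, hr0, hyr]
    have hd : d ≤ s r / r := le_of_tendsto htend hbound
    calc d ≤ s r / r := hd
      _ < 0 := div_neg_of_neg_of_pos hsr hr0
  · -- strict decrease
    intro a ha b hb hab
    have ha0 : (0 : ℝ) < a := lt_of_lt_of_le hrp0 ha
    have hsa : s a < 0 := hneg' a ha
    have h1 : (1 : ℝ) < b / a := (one_lt_div ha0).2 hab
    calc s b ≤ (b / a) * s a := hstep a b ha0 hab.le
      _ < 1 * s a := by exact mul_lt_mul_of_neg_right h1 hsa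
      _ = s a := one_mul _
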